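/- Under the hypotheses of the RQN factorization condition — namely each ā_i maximizes Q_i over A_i, ∑_{i=1}^{N} (Q_i(ā_i) + φ_i) = Q_tot(ā), and ∑_{i=1}^{N} (Q_i(a_i) + φ_i) ≥ Q_tot(a) for every joint action a ≠ ā — the maximum of Q_tot over all joint actions equals Q_tot(ā), which equals ∑_{i=1}^{N} Q_i(ā_i) + ∑_{i=1}^{N} φ_i. -/

import Mathlib

/-- Under the RQN factorization condition, the maximum of `Qtot` over all
joint actions equals `Qtot abar`, which equals `∑ i, Q i (abar i) + ∑ i, φ i`. -/
theorem rqn_max_value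
    (N : ℕ) (A : Fin N → Type*) [∀ i, Fintype (A i)] [∀ i, Nonempty (A i)]
    (Q : ∀ i, A i → ℝ) (φ : Fin N → ℝ)
    (Qtot : (∀ i, A i) → ℝ)
    (abar : ∀ i, A i)
    (hmax : ∀ i, ∀ a : A i, Q i a ≤ Q i (abar i))
    (heq : (∑ i, (Q i (abar i) + φ i)) = Qtot abar)
    (hge : ∀ a : ∀ i, A i, a ≠ abar → (∑ i, (Q i (a i) + φ i)) ≥ Qtot a) :
    (⨆ a : ∀ i, A i, Qtot a) = Qtot abar ∧
      Qtot abar = (∑ i, Q i (abar i)) + ∑ i, φ i := by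
  have hub : ∀ a : ∀ i, A i, Qtot a ≤ Qtot abar := by
    intro a
    by_cases h : a = abar
    · subst h; exact le_rfl
    · calc Qtot a ≤ ∑ i, (Q i (a i) + φ i) := hge a h
        _ ≤ ∑ i, (Q i (abar i) + φ i) :=
          Finset.sum_le_sum (fun i _ => add_le_add (hmax i (a i)) le_rfl)
        _ = Qtot abar := heq
  constructor
  · refine le_antisymm (ciSup_le hub) ?_
    exact le_ciSup (Set.Finite.bddAbove (Set.finite_range Qtot)) abar
  · rw [← heq, Finset.sum_add_distrib]
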